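/- arXiv:2305.08412 — 2 statements merged into one kernel-verified Lean document; each statement's English description precedes it below -/
import Mathlib

section
/- Let S ≥ 1, let ρ¹,…,ρ^S be nonnegative reals with at least one ρ^i > 0, let m₁,…,m_S > 0, and let β_{ij} ≥ 0 with β_{ij} > 0 whenever relevant (β_{ij} = 2π‖b^{ij}‖_{L¹} > 0). Define the S×S matrix M by M_{ij} = (β_{ij}/(m_i+m_j)²) m_j ρ^i for j ≠ i, and M_{ii} = (β_{ii}/(4m_i²)) m_i ρ^i − ∑_{j=1}^S (β_{ij}/(m_i+m_j)²)(2m_i+m_j) ρ^j. Then the transpose of M is strictly diagonally dominant: for every i, |M_{ii}| − ∑_{j≠i} |M_{ji}| = (β_{ii}/(2m_i)) ρ^i + ∑_{j≠i} (β_{ij}/(m_i+m_j)) ρ^j > 0; consequently M is invertible. -/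
open Matrix Finset

theorem M_transpose_diagonally_dominant_and_invertible
    (S : ℕ) (hS : 1 ≤ S)
    (ρ : Fin S → ℝ) (hρnn : ∀ i, 0 ≤ ρ i) (hρpos : ∃ i, 0 < ρ i)
    (m : Fin S → ℝ) (hm : ∀ i, 0 < m i)
    (β : Fin S → Fin S → ℝ) (hβpos : ∀ i j, 0 < β i j)
    (hβsymm : ∀ i j, β i j = β j i)
    (M : Matrix (Fin S) (Fin S) ℝ)
    (hMoff : ∀ i j, j ≠ i → M i j = β i j / (m i + m j) ^ 2 * m j * ρ i)
    (hMdiag : ∀ i, M i i = β i i / (4 * m i ^ 2) * m i * ρ i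
      - ∑ j : Fin S, β i j / (m i + m j) ^ 2 * (2 * m i + m j) * ρ j) :
    (∀ i, |M i i| - ∑ j ∈ univ.erase i, |M j i|
        = β i i / (2 * m i) * ρ i + ∑ j ∈ univ.erase i, β i j / (m i + m j) * ρ j ∧
      0 < |M i i| - ∑ j ∈ univ.erase i, |M j i|) ∧
    IsUnit M := by
  have hmne : ∀ i, m i ≠ 0 := fun i => (hm i).ne'
  have hsumne : ∀ i j, m i + m j ≠ 0 := fun i j => by
    have := hm i; have := hm j; positivity
  have hterm : ∀ i j, 0 ≤ β i j / (m i + m j) ^ 2 * (2 * m i + m j) * ρ j := fun i j => by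
    have h1 := hβpos i j; have h2 := hm i; have h3 := hm j; have h4 := hρnn j; positivity
  have key : ∀ i, |M i i| - ∑ j ∈ univ.erase i, |M j i|
      = β i i / (2 * m i) * ρ i + ∑ j ∈ univ.erase i, β i j / (m i + m j) * ρ j := by
    intro i
    have hMi : M i i = -(β i i / (2 * m i) * ρ i
        + ∑ j ∈ univ.erase i, β i j / (m i + m j) ^ 2 * (2 * m i + m j) * ρ j) := by
      rw [hMdiag i, ← Finset.sum_erase_add _ _ (mem_univ i)]
      have h : β i i / (m i + m i) ^ 2 * (2 * m i + m i) * ρ i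
          = β i i / (4 * m i ^ 2) * m i * ρ i + β i i / (2 * m i) * ρ i := by
        have h0 : (m i + m i) ^ 2 = 4 * m i ^ 2 := by ring
        rw [h0]
        have := hmne i; field_simp; ring
      rw [h]; ring
    have habs : |M i i| = β i i / (2 * m i) * ρ i
        + ∑ j ∈ univ.erase i, β i j / (m i + m j) ^ 2 * (2 * m i + m j) * ρ j := by
      rw [hMi, abs_neg, abs_of_nonneg]
      have h1 := hβpos i i; have h2 := hm i; have h3 := hρnn i
      have h4 : 0 ≤ ∑ j ∈ univ.erase i, β i j / (m i + m j) ^ 2 * (2 * m i + m j) * ρ j :=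
        Finset.sum_nonneg fun j _ => hterm i j
      positivity
    have hoff : ∀ j ∈ univ.erase i, |M j i| = β i j / (m i + m j) ^ 2 * m i * ρ j := by
      intro j hj
      have hji : i ≠ j := (Finset.mem_erase.mp hj).1.symm
      rw [hMoff j i hji, hβsymm j i, add_comm (m j) (m i), abs_of_nonneg]
      have h1 := hβpos i j; have h2 := hm i; have h3 := hm j; have h4 := hρnn j; positivity
    rw [habs, Finset.sum_congr rfl hoff, add_sub_assoc, ← Finset.sum_sub_distrib]
    congr 1
    refine Finset.sum_congr rfl fun j hj => ?_
    have h := hsumne i j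
    field_simp
    ring
  have hpos : ∀ i, 0 < |M i i| - ∑ j ∈ univ.erase i, |M j i| := by
    intro i
    rw [key i]
    obtain ⟨k, hk⟩ := hρpos
    have hsn : 0 ≤ ∑ j ∈ univ.erase i, β i j / (m i + m j) * ρ j :=
      Finset.sum_nonneg fun j _ => by
        have h1 := hβpos i j; have h2 := hm i; have h3 := hm j; have h4 := hρnn j; positivity
    rcases eq_or_ne k i with rfl | hki
    · have h1 := hβpos k k; have h2 := hm k
      have : 0 < β k k / (2 * m k) * ρ k := by positivity
      linarith
    · have h1 : 0 ≤ β i i / (2 * m i) * ρ i := by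
        have := hβpos i i; have := hm i; have := hρnn i; positivity
      have h2 : 0 < ∑ j ∈ univ.erase i, β i j / (m i + m j) * ρ j := by
        refine Finset.sum_pos' (fun j _ => ?_) ⟨k, Finset.mem_erase.mpr ⟨hki, mem_univ k⟩, ?_⟩
        · have := hβpos i j; have := hm i; have := hm j; have := hρnn j; positivity
        · have := hβpos i k; have := hm i; have := hm k; positivity
      linarith
  refine ⟨fun i => ⟨key i, hpos i⟩, ?_⟩
  rw [Matrix.isUnit_iff_isUnit_det, isUnit_iff_ne_zero]
  refine det_ne_zero_of_sum_col_lt_diag fun k => ?_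
  have := hpos k
  simp only [Real.norm_eq_abs]
  linarith
end

section
/- Let S ≥ 2, m₁,…,m_S > 0, ρ¹,…,ρ^S > 0, and let b_{ij} > 0 be symmetric coefficients (b_{ij} = b_{ji}). Suppose p¹,…,p^S ∈ ℝ satisfy ∑_{j=1}^S (b_{ij}/(m_i+m_j)²)(m_j ρ^i p^j − m_i ρ^j p^i) = 0 for all i = 1,…,S. Then there exists θ ∈ ℝ such that m_i p^i/ρ^i = θ for all i. -/
theorem common_temperature_compatibility
    (S : ℕ) (hS : 2 ≤ S)
    (m : Fin S → ℝ) (hm : ∀ i, 0 < m i)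
    (ρ : Fin S → ℝ) (hρ : ∀ i, 0 < ρ i)
    (b : Fin S → Fin S → ℝ) (hb : ∀ i j, 0 < b i j)
    (hbsymm : ∀ i j, b i j = b j i)
    (p : Fin S → ℝ)
    (hcomp : ∀ i, ∑ j : Fin S,
      b i j / (m i + m j) ^ 2 * (m j * ρ i * p j - m i * ρ j * p i) = 0) :
    ∃ θ : ℝ, ∀ i, m i * p i / ρ i = θ := by
  set θ : Fin S → ℝ := fun i => m i * p i / ρ i with hθ
  haveI : Nonempty (Fin S) := ⟨⟨0, by omega⟩⟩
  obtain ⟨i₀, hi₀⟩ := Finite.exists_max θ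
  refine ⟨θ i₀, fun i => ?_⟩
  -- rewrite each summand
  have key : ∀ i j, m j * ρ i * p j - m i * ρ j * p i
      = ρ i * ρ j * (θ j - θ i) := by
    intro i j
    have hρi := (hρ i).ne'
    have hρj := (hρ j).ne'
    simp only [hθ]
    field_simp
  have h0 := hcomp i₀
  have hnonpos : ∀ j ∈ Finset.univ, (b i₀ j / (m i₀ + m j) ^ 2 *
      (m j * ρ i₀ * p j - m i₀ * ρ j * p i₀)) ≤ 0 := by
    intro j _
    rw [key]
    apply mul_nonpos_of_nonneg_of_nonpos
    · exact le_of_lt (div_pos (hb _ _) (pow_pos (add_pos (hm _) (hm _)) 2))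
    · apply mul_nonpos_of_nonneg_of_nonpos
      · exact le_of_lt (mul_pos (hρ _) (hρ _))
      · linarith [hi₀ j]
  have heach := (Finset.sum_eq_zero_iff_of_nonpos hnonpos).mp h0 i (Finset.mem_univ i)
  rw [key] at heach
  have hc : 0 < b i₀ i / (m i₀ + m i) ^ 2 * (ρ i₀ * ρ i) := mul_pos (div_pos (hb _ _) (pow_pos (add_pos (hm _) (hm _)) 2)) (mul_pos (hρ _) (hρ _))
  have : θ i - θ i₀ = 0 := by
    by_contra h
    have := mul_ne_zero (ne_of_gt hc) h
    apply this
    linarith [heach]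
  linarith
end
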